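/- Let n ≥ t ≥ 1 be integers, let p1, …, pt ∈ ℤ^n, let r ∈ ℤ^n, let M1, …, Mt be integers, set a = M1·p1 + ⋯ + Mt·pt + r, and let A be the (n+1)×n integer matrix with first row a and remaining rows the identity. Let P be the t×n matrix with rows p1,…,pt and N(P) = {x ∈ ℤ^n : P·x = 0} its kernel lattice. Let c_n ≥ 1 be real, and let U be an n×n integer matrix of determinant ±1 such that Ã = A·U satisfies max{‖Ã_{:,1}‖, …, ‖Ã_{:,ℓ}‖} ≤ c_n·Λ_ℓ(L(A)) for every ℓ = 1,…,n, where L(A) = {A·x : x ∈ ℤ^n}. Then for every integer s with 1 ≤ s ≤ n − t and every index j ≤ s, ‖Ã_{:,j}‖ ≤ c_n·(‖r‖ + 1)·Λ_s(N(P)). -/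

import Mathlib

open Finset

/-- Euclidean norm of an integer vector. -/
noncomputable def vecEnorm {m : ℕ} (v : Fin m → ℤ) : ℝ :=
  Real.sqrt (∑ i, ((v i : ℝ)) ^ 2)

/-- The `k`-th successive minimum of a set (lattice) of integer vectors. -/
noncomputable def succMin {m : ℕ} (L : Set (Fin m → ℤ)) (k : ℕ) : ℝ :=
  sInf {s : ℝ | ∃ w : Fin k → (Fin m → ℤ),
    (∀ j, w j ∈ L) ∧ LinearIndependent ℤ w ∧ ∀ j, vecEnorm (w j) ≤ s}

lemma enorm_nonneg' {m : ℕ} (v : Fin m → ℤ) : 0 ≤ vecEnorm v := Real.sqrt_nonneg _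

/-- Existence of `s` linearly independent integer vectors in the kernel of `p`. -/
lemma exists_kernel_linIndep (n t s : ℕ) (hs : s ≤ n - t) (p : Fin t → Fin n → ℤ) :
    ∃ w : Fin s → Fin n → ℤ,
      (∀ j, ∀ i : Fin t, ∑ m, p i m * w j m = 0) ∧ LinearIndependent ℤ w := by
  classical
  set Pq : Matrix (Fin t) (Fin n) ℚ := fun i m => (p i m : ℚ) with hPq
  set f := Pq.mulVecLin with hf
  have hrange : Module.finrank ℚ (LinearMap.range f) ≤ t := by
    have := Submodule.finrank_le (LinearMap.range f)
    simpa [Module.finrank_fin_fun] using this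
  have hrn := LinearMap.finrank_range_add_finrank_ker f
  rw [Module.finrank_fin_fun] at hrn
  have hker : s ≤ Module.finrank ℚ (LinearMap.ker f) := by omega
  let B := Module.finBasis ℚ (LinearMap.ker f)
  let v : Fin s → Fin n → ℚ := fun j => (B (Fin.castLE hker j) : Fin n → ℚ)
  have hv : LinearIndependent ℚ v := by
    have h1 : LinearIndependent ℚ (fun j : Fin s => B (Fin.castLE hker j)) :=
      B.linearIndependent.comp _ (Fin.castLE_injective hker)
    exact h1.map' (LinearMap.ker f).subtype (Submodule.ker_subtype _)
  have hvker : ∀ j, Pq.mulVec (v j) = 0 := by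
    intro j
    have := (B (Fin.castLE hker j)).2
    rw [LinearMap.mem_ker] at this
    exact this
  set D : Fin s → ℕ := fun j => ∏ m, (v j m).den with hD
  have hDdvd : ∀ j m, (v j m).den ∣ D j := fun j m => Finset.dvd_prod_of_mem _ (mem_univ m)
  have hDpos : ∀ j, 0 < D j := fun j => Finset.prod_pos fun m _ => (v j m).pos
  have hint : ∀ j m, ∃ z : ℤ, (z : ℚ) = (D j : ℚ) * v j m := by
    intro j m
    obtain ⟨c, hc⟩ := hDdvd j m
    refine ⟨(v j m).num * c, ?_⟩
    have hden : ((v j m).den : ℚ) ≠ 0 := Nat.cast_ne_zero.2 (v j m).den_nz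
    have hmul := div_mul_cancel₀ ((v j m).num : ℚ) hden
    rw [Rat.num_div_den] at hmul
    rw [hc]
    push_cast
    linear_combination (-(c : ℚ)) * hmul
  choose w hw using hint
  refine ⟨w, ?_, ?_⟩
  · intro j i
    have hcast : ((∑ m, p i m * w j m : ℤ) : ℚ) = (D j : ℚ) * ∑ m, Pq i m * v j m := by
      push_cast
      rw [Finset.mul_sum]
      refine Finset.sum_congr rfl fun m _ => ?_
      rw [hw j m]; ring
    have h0 : ∑ m, Pq i m * v j m = 0 := by
      have := congrFun (hvker j) i
      simpa [Matrix.mulVec, dotProduct] using this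
    rw [h0, mul_zero] at hcast
    exact_mod_cast hcast
  · rw [Fintype.linearIndependent_iff]
    intro g hg j
    have hsum : ∑ k, ((g k : ℚ) * (D k : ℚ)) • v k = 0 := by
      funext m
      have hgm := congrFun hg m
      simp only [Finset.sum_apply, Pi.smul_apply, smul_eq_mul, Pi.zero_apply] at hgm ⊢
      have : ∀ k, (g k : ℚ) * (D k : ℚ) * v k m = ((g k * w k m : ℤ) : ℚ) := by
        intro k; rw [mul_assoc, ← hw k m]; push_cast; ring
      rw [Finset.sum_congr rfl fun k _ => this k]
      rw [← Int.cast_sum]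
      exact_mod_cast congrArg (fun z : ℤ => (z : ℚ)) hgm
    have := Fintype.linearIndependent_iff.1 hv _ hsum j
    have hD0 : ((D j : ℚ)) ≠ 0 := Nat.cast_ne_zero.2 (hDpos j).ne'
    have : (g j : ℚ) = 0 := by
      rcases mul_eq_zero.1 this with h | h
      · exact h
      · exact absurd h hD0
    exact_mod_cast this

/-- Norm bound for `A.mulVec x` when `x` is in the kernel of `p`. -/
lemma mulVec_enorm_le (n t : ℕ) (p : Fin t → Fin n → ℤ) (r : Fin n → ℤ)
    (M : Fin t → ℤ) (a : Fin n → ℤ) (ha : a = fun j => (∑ i, M i * p i j) + r j)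
    (A : Matrix (Fin (n + 1)) (Fin n) ℤ)
    (hA0 : ∀ j, A 0 j = a j)
    (hAsucc : ∀ i : Fin n, ∀ j, A i.succ j = if i = j then 1 else 0)
    (x : Fin n → ℤ) (hx : ∀ i : Fin t, ∑ m, p i m * x m = 0) :
    vecEnorm (A.mulVec x) ≤ (vecEnorm r + 1) * vecEnorm x := by
  have h0 : A.mulVec x 0 = ∑ j, r j * x j := by
    have : A.mulVec x 0 = ∑ j, a j * x j := by
      simp [Matrix.mulVec, dotProduct, hA0]
    rw [this, ha]
    have expand : ∑ j, ((∑ i, M i * p i j) + r j) * x j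
        = (∑ j, ∑ i, M i * p i j * x j) + ∑ j, r j * x j := by
      rw [← Finset.sum_add_distrib]
      refine Finset.sum_congr rfl fun j _ => ?_
      rw [add_mul, Finset.sum_mul]
    rw [expand, Finset.sum_comm]
    have : ∀ i : Fin t, ∑ j, M i * p i j * x j = 0 := by
      intro i
      have : ∑ j, M i * p i j * x j = M i * ∑ j, p i j * x j := by
        rw [Finset.mul_sum]; exact Finset.sum_congr rfl fun j _ => by ring
      rw [this, hx i, mul_zero]
    simp [this]
  have hsucc : ∀ k : Fin n, A.mulVec x k.succ = x k := by
    intro k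
    simp [Matrix.mulVec, dotProduct, hAsucc, ite_mul]
  -- now the real inequality
  set R := vecEnorm r with hR
  have hRnn : 0 ≤ R := Real.sqrt_nonneg _
  have hR2 : R ^ 2 = ∑ i, ((r i : ℝ)) ^ 2 :=
    Real.sq_sqrt (Finset.sum_nonneg fun i _ => sq_nonneg _)
  have hX2nn : (0:ℝ) ≤ ∑ i, ((x i : ℝ)) ^ 2 := Finset.sum_nonneg fun i _ => sq_nonneg _
  have hCS : (∑ j, (r j : ℝ) * (x j : ℝ)) ^ 2 ≤ (∑ i, ((r i : ℝ)) ^ 2) * ∑ i, ((x i : ℝ)) ^ 2 :=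
    Finset.sum_mul_sq_le_sq_mul_sq _ _ _
  have hexp : vecEnorm (A.mulVec x)
      = Real.sqrt ((∑ j, (r j : ℝ) * (x j : ℝ)) ^ 2 + ∑ i, ((x i : ℝ)) ^ 2) := by
    rw [vecEnorm, Fin.sum_univ_succ]
    congr 1
    congr 1
    · rw [h0]; push_cast; ring
    · exact Finset.sum_congr rfl fun k _ => by rw [hsucc k]
  rw [hexp]
  have hbound : (∑ j, (r j : ℝ) * (x j : ℝ)) ^ 2 + ∑ i, ((x i : ℝ)) ^ 2
      ≤ (R + 1) ^ 2 * ∑ i, ((x i : ℝ)) ^ 2 := by nlinarith [hCS, hR2, hX2nn, hRnn]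
  calc Real.sqrt ((∑ j, (r j : ℝ) * (x j : ℝ)) ^ 2 + ∑ i, ((x i : ℝ)) ^ 2)
      ≤ Real.sqrt ((R + 1) ^ 2 * ∑ i, ((x i : ℝ)) ^ 2) := Real.sqrt_le_sqrt hbound
    _ = (R + 1) * vecEnorm x := by
        rw [Real.sqrt_mul (sq_nonneg _), Real.sqrt_sq (by linarith), vecEnorm]

theorem cbr_column_norm_upper_bound (n t : ℕ) (ht : 1 ≤ t) (htn : t ≤ n)
    (p : Fin t → Fin n → ℤ) (r : Fin n → ℤ)
    (M : Fin t → ℤ)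
    (a : Fin n → ℤ) (ha : a = fun j => (∑ i, M i * p i j) + r j)
    (A : Matrix (Fin (n + 1)) (Fin n) ℤ)
    (hA0 : ∀ j, A 0 j = a j)
    (hAsucc : ∀ i : Fin n, ∀ j, A i.succ j = if i = j then 1 else 0)
    (c : ℝ) (hc : 1 ≤ c)
    (U : Matrix (Fin n) (Fin n) ℤ) (hU : U.det = 1 ∨ U.det = -1)
    (hred : ∀ ℓ : ℕ, 1 ≤ ℓ → ℓ ≤ n → ∀ j : Fin n, (j : ℕ) < ℓ →
      vecEnorm (fun i => (A * U) i j) ≤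
        c * succMin {y : Fin (n + 1) → ℤ | ∃ x : Fin n → ℤ, y = A.mulVec x} ℓ) :
    ∀ s : ℕ, 1 ≤ s → s ≤ n - t → ∀ j : Fin n, (j : ℕ) < s →
      vecEnorm (fun i => (A * U) i j) ≤
        c * (vecEnorm r + 1) *
          succMin {x : Fin n → ℤ | ∀ i : Fin t, ∑ m, p i m * x m = 0} s := by
  intro s hs1 hs2 j hj
  set R := vecEnorm r with hRdef
  have hRnn : 0 ≤ R := Real.sqrt_nonneg _
  have hR1 : (0:ℝ) < R + 1 := by linarith
  set Sset : Set ℝ := {b : ℝ | ∃ w : Fin s → (Fin n → ℤ),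
    (∀ j, w j ∈ {x : Fin n → ℤ | ∀ i : Fin t, ∑ m, p i m * x m = 0}) ∧
    LinearIndependent ℤ w ∧ ∀ j, vecEnorm (w j) ≤ b} with hSset
  set Tset : Set ℝ := {b : ℝ | ∃ w : Fin s → (Fin (n+1) → ℤ),
    (∀ j, w j ∈ {y : Fin (n + 1) → ℤ | ∃ x : Fin n → ℤ, y = A.mulVec x}) ∧
    LinearIndependent ℤ w ∧ ∀ j, vecEnorm (w j) ≤ b} with hTset
  -- injectivity of mulVec for lin. indep. transfer
  have hinj : LinearMap.ker (Matrix.mulVecLin A) = ⊥ := by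
    rw [LinearMap.ker_eq_bot']
    intro x hx
    funext k
    have h1 := congrFun hx k.succ
    have h2 : A.mulVec x k.succ = x k := by
      simp [Matrix.mulVec, dotProduct, hAsucc, ite_mul]
    simp only [Matrix.mulVecLin_apply] at h1
    rw [h2] at h1
    exact h1
  -- nonemptiness of Sset
  obtain ⟨w₀, hw₀ker, hw₀li⟩ := exists_kernel_linIndep n t s hs2 p
  have hSne : Sset.Nonempty := by
    refine ⟨∑ k, vecEnorm (w₀ k), w₀, fun k => hw₀ker k, hw₀li, fun k => ?_⟩
    exact Finset.single_le_sum (fun i _ => enorm_nonneg' _) (Finset.mem_univ k)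
  -- Tset bounded below by 0
  have hTbdd : BddBelow Tset := by
    refine ⟨0, fun b hb => ?_⟩
    obtain ⟨w, _, _, hwb⟩ := hb
    exact le_trans (enorm_nonneg' (w ⟨0, hs1⟩)) (hwb ⟨0, hs1⟩)
  -- key: each b ∈ Sset gives (R+1)*b ∈ Tset
  have hkey : ∀ b ∈ Sset, (R + 1) * b ∈ Tset := by
    intro b hb
    obtain ⟨w, hwker, hwli, hwb⟩ := hb
    refine ⟨fun k => A.mulVec (w k), fun k => ⟨w k, rfl⟩, ?_, fun k => ?_⟩
    · have := hwli.map' (Matrix.mulVecLin A) hinj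
      exact this
    · calc vecEnorm (A.mulVec (w k)) ≤ (R + 1) * vecEnorm (w k) :=
            mulVec_enorm_le n t p r M a ha A hA0 hAsucc (w k) (hwker k)
        _ ≤ (R + 1) * b := by
            exact mul_le_mul_of_nonneg_left (hwb k) (le_of_lt hR1)
  -- succMin comparison
  have hstep : succMin {y : Fin (n + 1) → ℤ | ∃ x : Fin n → ℤ, y = A.mulVec x} s
      ≤ (R + 1) * succMin {x : Fin n → ℤ | ∀ i : Fin t, ∑ m, p i m * x m = 0} s := by
    have hdivle : sInf Tset / (R + 1) ≤ sInf Sset := by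
      refine le_csInf hSne fun b hb => ?_
      rw [div_le_iff₀ hR1]
      calc sInf Tset ≤ (R + 1) * b := csInf_le hTbdd (hkey b hb)
        _ = b * (R + 1) := mul_comm _ _
    have := (div_le_iff₀ hR1).1 hdivle
    rw [succMin, succMin]
    calc sInf Tset ≤ sInf Sset * (R + 1) := this
      _ = (R + 1) * sInf Sset := mul_comm _ _
  have hn : s ≤ n := le_trans hs2 (Nat.sub_le n t)
  calc vecEnorm (fun i => (A * U) i j)
      ≤ c * succMin {y : Fin (n + 1) → ℤ | ∃ x : Fin n → ℤ, y = A.mulVec x} s :=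
        hred s hs1 hn j hj
    _ ≤ c * ((R + 1) * succMin {x : Fin n → ℤ | ∀ i : Fin t, ∑ m, p i m * x m = 0} s) :=
        mul_le_mul_of_nonneg_left hstep (by linarith)
    _ = c * (R + 1) * succMin {x : Fin n → ℤ | ∀ i : Fin t, ∑ m, p i m * x m = 0} s := by ring
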